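/- Let a₁ ≤ a₂ ≤ … ≤ a_n and b₁, …, b_n be real numbers, and let π be a permutation of [n] sorting b in non-decreasing order (b_{π(1)} ≤ … ≤ b_{π(n)}). Then Σ_{i=1}^n |a_{π(i)} − a_i| ≤ 2·Σ_{i=1}^n |b_i − a_i|. -/

import Mathlib

open Equiv Equiv.Perm Finset Function

/-- Binary supermodularity of `min`. -/
private lemma min_add_min_le_min_add_min {a₁ a₂ b₁ b₂ : ℝ} (ha : a₂ ≤ a₁) (hb : b₂ ≤ b₁) :
    min a₁ b₂ + min a₂ b₁ ≤ min a₁ b₁ + min a₂ b₂ := by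
  rcases le_total a₂ b₂ with h | h
  · rw [min_eq_left h, min_eq_left (h.trans hb)]
    exact add_le_add_left (min_le_min le_rfl hb) _
  · rw [min_eq_right h, min_eq_right (h.trans ha)]
    have := min_le_min ha (le_refl b₁)
    linarith

/-- ℓ1 rearrangement core: `∑ min (f i) (g (σ i)) ≤ ∑ min (f i) (g i)`
when `f` and `g` monovary on `s`. -/
private lemma monovaryOn_sum_min_comp_perm_le {ι : Type*} {s : Finset ι} {σ : Perm ι}
    {f g : ι → ℝ} (hfg : MonovaryOn f g s) (hσ : {x | σ x ≠ x} ⊆ s) :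
    ∑ i ∈ s, min (f i) (g (σ i)) ≤ ∑ i ∈ s, min (f i) (g i) := by
  classical
  revert hσ σ hfg
  apply Finset.induction_on_max_value (fun i ↦ toLex (g i, f i))
    (motive := fun t ↦ ∀ {σ : Perm ι}, MonovaryOn f g t → {x | σ x ≠ x} ⊆ t →
      ∑ i ∈ t, min (f i) (g (σ i)) ≤ ∑ i ∈ t, min (f i) (g i)) s
  · simp only [le_rfl, Finset.sum_empty, imp_true_iff]
  intro a s has hamax hind σ hfg hσ
  set τ : Perm ι := σ.trans (swap a (σ a)) with hτ
  have hτs : {x | τ x ≠ x} ⊆ s := by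
    intro x hx
    simp only [τ, Ne, Set.mem_setOf_eq, Equiv.coe_trans, Equiv.swap_comp_apply] at hx
    split_ifs at hx with h₁ h₂
    · obtain rfl | hax := eq_or_ne x a
      · contradiction
      · exact mem_of_mem_insert_of_ne (hσ fun h ↦ hax <| h.symm.trans h₁) hax
    · exact (hx <| σ.injective h₂.symm).elim
    · exact mem_of_mem_insert_of_ne (hσ hx) (ne_of_apply_ne _ h₂)
  specialize hind (hfg.subset <| subset_insert _ _) hτs
  simp_rw [sum_insert has]
  refine le_trans ?_ (add_le_add_right hind _)
  obtain hσa | hσa := eq_or_ne a (σ a)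
  · rw [hτ, ← hσa, swap_self, trans_refl]
  have h1s : σ⁻¹ a ∈ s := by
    rw [Ne, ← inv_eq_iff_eq] at hσa
    refine mem_of_mem_insert_of_ne (hσ fun h ↦ hσa ?_) hσa
    rwa [(show ∀ x, σ (σ⁻¹ x) = x from σ.apply_symm_apply), eq_comm] at h
  simp only [← s.sum_erase_add _ h1s, add_comm]
  rw [← add_assoc, ← add_assoc]
  simp only [hτ, swap_apply_left, Function.comp_apply, Equiv.coe_trans, (show ∀ x, σ (σ⁻¹ x) = x from σ.apply_symm_apply)]
  refine add_le_add (min_add_min_le_min_add_min ?_ ?_) (sum_congr rfl fun x hx ↦ ?_).le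
  · specialize hamax (σ⁻¹ a) h1s
    rw [Prod.Lex.le_iff] at hamax
    cases' hamax with hamax hamax
    · exact hfg (mem_insert_of_mem h1s) (mem_insert_self _ _) hamax
    · exact hamax.2
  · specialize hamax (σ a) (mem_of_mem_insert_of_ne (hσ <| σ.injective.ne hσa.symm) hσa.symm)
    rw [Prod.Lex.le_iff] at hamax
    cases' hamax with hamax hamax
    · exact hamax.le
    · exact hamax.1.le
  · rw [mem_erase, Ne, eq_inv_iff_eq] at hx
    rw [swap_apply_of_ne_of_ne hx.1 (σ.injective.ne _)]
    rintro rfl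
    exact has hx.2

/-- ℓ1 rearrangement: if `a` and `c` are both monotone, then
`∑ |c i - a i| ≤ ∑ |c (σ i) - a i|` for any permutation `σ`. -/
private lemma sum_abs_sub_le_sum_abs_sub_comp_perm {n : ℕ} {a c : Fin n → ℝ}
    (ha : Monotone a) (hc : Monotone c) (σ : Equiv.Perm (Fin n)) :
    ∑ i, |c i - a i| ≤ ∑ i, |c (σ i) - a i| := by
  have hmono : MonovaryOn a c (Finset.univ : Finset (Fin n)) := by
    intro i _ j _ hij
    exact ha (le_of_not_ge fun h ↦ absurd (hc h) (not_le.2 hij))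
  have key : ∑ i, min (a i) (c (σ i)) ≤ ∑ i, min (a i) (c i) :=
    monovaryOn_sum_min_comp_perm_le hmono (fun x _ ↦ Finset.mem_univ x)
  have habs : ∀ x y : ℝ, |y - x| = x + y - 2 * min x y := by
    intro x y
    rcases le_total x y with h | h
    · rw [min_eq_left h, abs_of_nonneg (by linarith)]; ring
    · rw [min_eq_right h, abs_of_nonpos (by linarith)]; ring
  simp only [habs]
  have hsum : ∑ i, c (σ i) = ∑ i, c i := Equiv.sum_comp σ c
  rw [Finset.sum_sub_distrib, Finset.sum_sub_distrib, Finset.sum_add_distrib,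
    Finset.sum_add_distrib, ← Finset.mul_sum, ← Finset.mul_sum, hsum]
  linarith

/-- ℓ1 rearrangement-type bound: if `a` is non-decreasing and `π` sorts `b` in
non-decreasing order, then `Σᵢ |a_{π(i)} − a i| ≤ 2·Σᵢ |b i − a i|`. -/
theorem sorted_perm_l1_bound
    {n : ℕ} (a b : Fin n → ℝ) (ha : Monotone a)
    (π : Equiv.Perm (Fin n)) (hπ : Monotone fun i => b (π i)) :
    ∑ i, |a (π i) - a i| ≤ 2 * ∑ i, |b i - a i| := by
  have h1 : ∀ i, |a (π i) - a i| ≤ |b (π i) - a i| + |b (π i) - a (π i)| := by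
    intro i
    calc |a (π i) - a i| = |(b (π i) - a i) - (b (π i) - a (π i))| := by ring_nf
      _ ≤ |b (π i) - a i| + |b (π i) - a (π i)| := abs_sub _ _
  have h2 : ∑ i, |b (π i) - a (π i)| = ∑ i, |b i - a i| :=
    Equiv.sum_comp π (fun i ↦ |b i - a i|)
  have h3 : ∑ i, |b (π i) - a i| ≤ ∑ i, |b i - a i| := by
    have := sum_abs_sub_le_sum_abs_sub_comp_perm (c := fun i ↦ b (π i)) ha hπ π⁻¹
    simpa using this
  calc ∑ i, |a (π i) - a i| ≤ ∑ i, (|b (π i) - a i| + |b (π i) - a (π i)|) :=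
        Finset.sum_le_sum fun i _ ↦ h1 i
    _ = ∑ i, |b (π i) - a i| + ∑ i, |b (π i) - a (π i)| := Finset.sum_add_distrib
    _ ≤ ∑ i, |b i - a i| + ∑ i, |b i - a i| := by rw [h2]; linarith
    _ = 2 * ∑ i, |b i - a i| := by ring
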